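/- If T_w and T_u are distinct nodes of the n-universal model T(n), then T_w ≢ T_u, i.e., it is not the case that there are monotonic maps both from T_w into T_u and from T_u into T_w. -/

import Mathlib

/-! ## Formulas of intuitionistic propositional logic -/

inductive Formula : Type
  | bot : Formula
  | var : ℕ → Formula
  | and : Formula → Formula → Formula
  | or  : Formula → Formula → Formula
  | imp : Formula → Formula → Formula
  deriving DecidableEq

namespace Formula

def top : Formula := imp bot bot

def iff_ (φ ψ : Formula) : Formula := and (imp φ ψ) (imp ψ φ)

/-- `φ` contains no implication at all. -/
def noImp : Formula → Prop
  | bot => True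
  | var _ => True
  | and φ ψ => noImp φ ∧ noImp ψ
  | or φ ψ => noImp φ ∧ noImp ψ
  | imp _ _ => False

/-- NNIL-formulas: no nesting of implications to the left. -/
def IsNNIL : Formula → Prop
  | bot => True
  | var _ => True
  | and φ ψ => IsNNIL φ ∧ IsNNIL ψ
  | or φ ψ => IsNNIL φ ∧ IsNNIL ψ
  | imp φ ψ => noImp φ ∧ IsNNIL ψ

/-- `φ` is an `n`-formula: all its propositional variables are among `p_0, …, p_{n-1}`. -/
def varsBelow (n : ℕ) : Formula → Prop
  | bot => True
  | var p => p < n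
  | and φ ψ => varsBelow n φ ∧ varsBelow n ψ
  | or φ ψ => varsBelow n φ ∧ varsBelow n ψ
  | imp φ ψ => varsBelow n φ ∧ varsBelow n ψ

/-- the propositional variable `p` occurs in the formula -/
def occurs (p : ℕ) : Formula → Prop
  | bot => False
  | var q => q = p
  | and φ ψ => occurs p φ ∨ occurs p ψ
  | or φ ψ => occurs p φ ∨ occurs p ψ
  | imp φ ψ => occurs p φ ∨ occurs p ψ

/-- uniform substitution -/
def subst (σ : ℕ → Formula) : Formula → Formula
  | bot => bot
  | var p => σ p
  | and φ ψ => and (subst σ φ) (subst σ ψ)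
  | or φ ψ => or (subst σ φ) (subst σ ψ)
  | imp φ ψ => imp (subst σ φ) (subst σ ψ)

end Formula

/-- finite conjunction (empty conjunction is ⊤) -/
def listAnd : List Formula → Formula
  | [] => Formula.top
  | φ :: l => Formula.and φ (listAnd l)

/-- finite disjunction (empty disjunction is ⊥) -/
def listOr : List Formula → Formula
  | [] => Formula.bot
  | φ :: l => Formula.or φ (listOr l)

/-! ## Kripke structures, models and satisfaction -/

/-- raw Kripke structure: worlds, relation, Boolean valuation -/
structure KStruct where
  W : Type
  R : W → W → Prop
  V : W → ℕ → Bool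

namespace KStruct

/-- a Kripke model: `R` is a partial order and `V` is persistent -/
def IsModel (M : KStruct) : Prop :=
  (∀ w, M.R w w) ∧
  (∀ w u v, M.R w u → M.R u v → M.R w v) ∧
  (∀ w u, M.R w u → M.R u w → w = u) ∧
  (∀ w u p, M.R w u → M.V w p = true → M.V u p = true)

/-- an `n`-model: a Kripke model whose valuation is restricted to the variables `p_0,…,p_{n-1}` -/
def IsNModel (M : KStruct) (n : ℕ) : Prop :=
  M.IsModel ∧ ∀ w p, n ≤ p → M.V w p = false

/-- intuitionistic satisfaction -/
def sat (M : KStruct) : M.W → Formula → Prop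
  | _, Formula.bot => False
  | w, Formula.var p => M.V w p = true
  | w, Formula.and φ ψ => M.sat w φ ∧ M.sat w ψ
  | w, Formula.or φ ψ => M.sat w φ ∨ M.sat w ψ
  | w, Formula.imp φ ψ => ∀ u, M.R w u → M.sat u φ → M.sat u ψ

/-- the submodel on a subset of the worlds -/
def restrict (M : KStruct) (S : Set M.W) : KStruct where
  W := S
  R := fun a b => M.R a.1 b.1
  V := fun a p => M.V a.1 p

end KStruct

/-- monotonic map between Kripke structures: preserves the order and the colors -/
def Monotonic (M N : KStruct) (f : M.W → N.W) : Prop :=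
  (∀ w u, M.R w u → N.R (f w) (f u)) ∧ (∀ w p, N.V (f w) p = M.V w p)

/-- p-morphism: a monotonic map satisfying the forth condition -/
def PMorphism (M N : KStruct) (f : M.W → N.W) : Prop :=
  Monotonic M N f ∧ ∀ w u', N.R (f w) u' → ∃ u, M.R w u ∧ f u = u'

/-- MR: the class of formulas reflected by monotonic maps between Kripke models -/
def MR (φ : Formula) : Prop :=
  ∀ (N M : KStruct), N.IsModel → M.IsModel →
    ∀ f : N.W → M.W, Monotonic N M f → ∀ w : N.W, M.sat (f w) φ → N.sat w φ

/-- `r` is a root of `M` -/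
def IsRoot (M : KStruct) (r : M.W) : Prop := ∀ w, M.R r w

/-- `M` is tree-like with root `r`: rooted, and each point has a finite,
linearly ordered set of predecessors -/
def IsTree (M : KStruct) (r : M.W) : Prop :=
  IsRoot M r ∧ (∀ w : M.W, {u | M.R u w}.Finite) ∧
  (∀ w u v : M.W, M.R u w → M.R v w → (M.R u v ∨ M.R v u))

/-- `u` is an immediate (proper) successor of `w` -/
def ImmSucc (M : KStruct) (w u : M.W) : Prop :=
  M.R w u ∧ w ≠ u ∧ ∀ v, M.R w v → M.R v u → v = w ∨ v = u

/-- `S` carries a color-preserving submodel of `M` -/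
def ColorPresSub (M : KStruct) (S : Set M.W) : Prop :=
  ∀ w ∈ S, ∀ u, M.R w u → ∃ v ∈ S, M.R w v ∧ ∀ p, M.V v p = M.V u p

/-! ## The β-formulas of finite models -/

/-- the variables among `p_0,…,p_{n-1}` true at `w` -/
def propList (M : KStruct) (n : ℕ) (w : M.W) : List Formula :=
  ((List.range n).filter (fun p => M.V w p)).map Formula.var

/-- the variables among `p_0,…,p_{n-1}` false at `w` -/
def notpropList (M : KStruct) (n : ℕ) (w : M.W) : List Formula :=
  ((List.range n).filter (fun p => !(M.V w p))).map Formula.var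

open Classical in
/-- the immediate successors of `w`, as a list -/
noncomputable def immSuccList (M : KStruct) [Fintype M.W] (w : M.W) : List M.W :=
  (Finset.univ.filter (fun u => ImmSucc M w u)).toList

/-- β(w), defined by recursion on the depth of `w` (computed with enough fuel):
`β(w) = ⋀prop(w) → (⋁notprop(w) ∨ β(w_1) ∨ … ∨ β(w_k))` where the `w_i` are the
immediate successors of `w` (for maximal `w` the last disjunct is the empty disjunction). -/
noncomputable def betaFuel (M : KStruct) [Fintype M.W] (n : ℕ) : ℕ → M.W → Formula
  | 0, _ => Formula.bot
  | (k+1), w =>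
      Formula.imp (listAnd (propList M n w))
        (listOr (notpropList M n w ++ (immSuccList M w).map (fun u => betaFuel M n k u)))

/-- β(w) for a point `w` of a finite `n`-model: `Fintype.card M.W` is an upper bound
for the depth of any point, so the recursion above never runs out of fuel. -/
noncomputable def beta (M : KStruct) [inst : Fintype M.W] (n : ℕ) (w : M.W) : Formula :=
  betaFuel M n (Fintype.card M.W) w

/-! ## Unravelings -/

/-- the unraveling `T_N` of a rooted model `(N, r)`: points are the finite sequences
`⟨r, w_1, …, w_k⟩` in which each entry is an immediate successor of the preceding one,
ordered by the initial-segment relation; such a sequence satisfies the same variables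
as its last entry. -/
def Unravel (M : KStruct) (r : M.W) : KStruct where
  W := {l : List M.W // l.head? = some r ∧ List.Chain' (ImmSucc M) l}
  R := fun σ τ => σ.1 <+: τ.1
  V := fun σ p => (σ.1.getLast?.map (fun w => M.V w p)).getD false

/-! ## Kripke frames -/

structure KFrame where
  W : Type
  R : W → W → Prop

namespace KFrame

/-- a Kripke frame: `R` is a partial order -/
def IsFrame (F : KFrame) : Prop :=
  (∀ w, F.R w w) ∧ (∀ w u v, F.R w u → F.R u v → F.R w v) ∧
  (∀ w u, F.R w u → F.R u w → w = u)

def Persistent (F : KFrame) (V : F.W → ℕ → Bool) : Prop :=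
  ∀ w u p, F.R w u → V w p = true → V u p = true

/-- the model on `F` given by a valuation -/
def model (F : KFrame) (V : F.W → ℕ → Bool) : KStruct := ⟨F.W, F.R, V⟩

/-- `F ⊨ φ` : `φ` is true at every point of every model on `F` -/
def valid (F : KFrame) (φ : Formula) : Prop :=
  ∀ V, F.Persistent V → ∀ w, (F.model V).sat w φ

/-- the substructure of `F` on a subset `S` of its domain, with the restricted order -/
def restrictF (F : KFrame) (S : Set F.W) : KFrame :=
  ⟨S, fun a b => F.R a.1 b.1⟩

end KFrame

/-- a monotonic map from a model `N` into a frame `F` which is color-consistent: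
`f(w) R f(u)` implies `col(w) ≤ col(u)` -/
def ColorConsistentMap (N : KStruct) (F : KFrame) (f : N.W → F.W) : Prop :=
  (∀ w u, N.R w u → F.R (f w) (f u)) ∧
  (∀ w u, F.R (f w) (f u) → ∀ p, N.V w p = true → N.V u p = true)


/-! ## The n-universal model 𝒯(n) for NNIL -/

/-- an `n`-color -/
abbrev Col (n : ℕ) := Fin n → Bool

/-- componentwise order on colors -/
def ColLE {n : ℕ} (c d : Col n) : Prop := ∀ i, c i = true → d i = true

def ColLT {n : ℕ} (c d : Col n) : Prop := ColLE c d ∧ c ≠ d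

/-- finite colored trees: a root color together with the list of subtrees
hanging above the root -/
inductive CTree (n : ℕ) : Type
  | node : Col n → List (CTree n) → CTree n

namespace CTree

variable {n : ℕ}

def color : CTree n → Col n
  | node c _ => c

def children : CTree n → List (CTree n)
  | node _ ts => ts

/-- the subtree of `t` at a position (a list of child indices) -/
def subt : List ℕ → CTree n → Option (CTree n)
  | [], t => some t
  | i :: l, t => (t.children[i]?).bind (subt l)

/-- the finite tree-like `n`-model determined by a colored tree: its worlds are
the positions of `t`, ordered by the initial-segment relation, and a position
satisfies `p_i` iff the color of the subtree there is `1` at `i`. -/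
def toModel (t : CTree n) : KStruct where
  W := {l : List ℕ // (subt l t).isSome = true}
  R := fun a b => a.1 <+: b.1
  V := fun a p =>
    if h : p < n then ((subt a.1 t).map (fun s => s.color ⟨p, h⟩)).getD false
    else false

/-- the root of the model of a tree -/
def root (t : CTree n) : t.toModel.W := ⟨[], rfl⟩

/-- an injective code of colors -/
def colCode (c : Col n) : ℕ := ∑ i : Fin n, (if c i then 2 ^ (i : ℕ) else 0)

/-- an injective code of lists of numbers -/
def listCode : List ℕ → ℕ
  | [] => 0
  | a :: l => Nat.pair a (listCode l) + 1

/-- an injective code of colored trees, used to order the children of every node of a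
tree in the universal model canonically -/
def code : CTree n → ℕ
  | node c ts => Nat.pair (colCode c) (listCode (ts.attach.map (fun x => code x.1)))
decreasing_by
  have := List.sizeOf_lt_of_mem x.2
  simp only [CTree.node.sizeOf_spec]
  omega

end CTree

/-- `MLE s t` (`s ≤ t`): there is a monotonic map from (the model of) `t` into `s` -/
def MLE {n : ℕ} (s t : CTree n) : Prop :=
  ∃ f : t.toModel.W → s.toModel.W, Monotonic t.toModel s.toModel f

/-- membership in the domain of the universal model `𝒯(n)`, built in layers:
layer 1 consists of the one-point trees (one for each color); a tree of a later layer
is built from a set `X` of pairwise `≤`-incomparable trees of earlier layers (encoded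
as a list sorted canonically by `code`) by adding a fresh root below whose color is
strictly smaller than every color occurring in the trees of `X`. -/
inductive UMem : {n : ℕ} → CTree n → Prop
  | single {n : ℕ} (c : Col n) : UMem (CTree.node c [])
  | step {n : ℕ} (c : Col n) (ts : List (CTree n)) :
      ts ≠ [] →
      (∀ t ∈ ts, UMem t) →
      List.Chain' (fun a b => CTree.code a < CTree.code b) ts →
      (∀ t ∈ ts, ∀ s ∈ ts, t ≠ s → ¬ MLE t s) →
      (∀ t ∈ ts, ∀ (l : List ℕ) (s : CTree n), CTree.subt l t = some s →
        ColLT c s.color) →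
      UMem (CTree.node c ts)

/-- the universal model `𝒯(n)`: its points are the trees in `UMem`, ordered by `≤`
(where `T_w ≤ T_u` iff there is a monotonic map from `T_u` into `T_w`), and the color
of a node is the color of the root of the corresponding tree. -/
def UnivModel (n : ℕ) : KStruct where
  W := {t : CTree n // UMem t}
  R := fun a b => MLE a.1 b.1
  V := fun a p => if h : p < n then a.1.color ⟨p, h⟩ else false

/-- mutual monotonic mappability (`≡`) of Kripke structures -/
def MEquiv (A B : KStruct) : Prop :=
  (∃ f : B.W → A.W, Monotonic B A f) ∧ (∃ g : A.W → B.W, Monotonic A B g)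


/-! ### Auxiliary lemmas -/

section Aux

open CTree

variable {n : ℕ}

lemma colLE_antisymm {c d : Col n} (h1 : ColLE c d) (h2 : ColLE d c) : c = d := by
  funext i
  cases hc : c i <;> cases hd : d i
  · rfl
  · exact (Bool.false_ne_true (hc ▸ h2 i hd)).elim
  · exact (Bool.false_ne_true (hd ▸ h1 i hc)).elim
  · rfl

lemma Monotonic.comp {A B C : KStruct} {f : A.W → B.W} {g : B.W → C.W}
    (hf : Monotonic A B f) (hg : Monotonic B C g) : Monotonic A C (g ∘ f) :=
  ⟨fun w u h => hg.1 _ _ (hf.1 w u h), fun w p => (hg.2 (f w) p).trans (hf.2 w p)⟩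

lemma MLE.trans' {a b c : CTree n} (h1 : MLE a b) (h2 : MLE b c) : MLE a c := by
  obtain ⟨f, hf⟩ := h1
  obtain ⟨g, hg⟩ := h2
  exact ⟨f ∘ g, hg.comp hf⟩

/-- the color of a world of the model of a tree -/
def colAt (t : CTree n) (w : t.toModel.W) : Col n := fun i => t.toModel.V w i.1

lemma colAt_spec (t : CTree n) (w : t.toModel.W) (u : CTree n)
    (h : subt w.1 t = some u) : colAt t w = u.color := by
  funext i
  simp [colAt, CTree.toModel, h, i.2]

lemma colAt_nil {t : CTree n} (w : t.toModel.W) (h : w.1 = []) :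
    colAt t w = t.color :=
  colAt_spec t w t (by rw [h]; rfl)

lemma colAt_root (t : CTree n) : colAt t (root t) = t.color :=
  colAt_nil _ rfl

lemma Monotonic.colAt_eq {s t : CTree n} {f : t.toModel.W → s.toModel.W}
    (hf : Monotonic t.toModel s.toModel f) (w : t.toModel.W) :
    colAt s (f w) = colAt t w := by
  funext i
  exact hf.2 w i.1

lemma subt_cons_eq {c : Col n} {ts : List (CTree n)} {i : ℕ} (hi : i < ts.length)
    (l : List ℕ) : subt (i :: l) (CTree.node c ts) = subt l ts[i] := by
  simp [subt, CTree.children, List.getElem?_eq_getElem hi]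

lemma world_cons {c : Col n} {ts : List (CTree n)} {i : ℕ} {l : List ℕ}
    (h : (subt (i :: l) (CTree.node c ts)).isSome = true) :
    ∃ hi : i < ts.length, subt (i :: l) (CTree.node c ts) = subt l ts[i] := by
  by_cases hi : i < ts.length
  · exact ⟨hi, subt_cons_eq hi l⟩
  · exfalso
    have : ts[i]? = none := List.getElem?_eq_none (le_of_not_gt hi)
    simp [subt, CTree.children, this] at h

/-- non-root worlds of a tree in the universal model have color strictly above
the root color -/
lemma colAt_cases {c : Col n} {ts : List (CTree n)} (hU : UMem (CTree.node c ts))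
    (w : (CTree.node c ts).toModel.W) :
    w.1 = [] ∨ ColLT c (colAt (CTree.node c ts) w) := by
  obtain ⟨l, hl⟩ := w
  cases l with
  | nil => exact Or.inl rfl
  | cons i l =>
    right
    obtain ⟨hi, heq⟩ := world_cons hl
    have hsome : (subt l ts[i]).isSome = true := heq ▸ hl
    obtain ⟨u, hu⟩ := Option.isSome_iff_exists.1 hsome
    have hcol : colAt (CTree.node c ts) ⟨i :: l, hl⟩ = u.color :=
      colAt_spec _ _ u (heq.trans hu)
    rw [hcol]
    cases hU with
    | single c => exact absurd hi (by simp)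
    | step c ts h1 h2 h3 h4 h5 =>
      exact h5 ts[i] (List.getElem_mem hi) l u hu

/-- inclusion map of a child subtree model -/
def childInc {c : Col n} {ts : List (CTree n)} {i : ℕ} (hi : i < ts.length) :
    (ts[i]).toModel.W → (CTree.node c ts).toModel.W :=
  fun w => ⟨i :: w.1, by rw [subt_cons_eq hi]; exact w.2⟩

lemma childInc_monotonic {c : Col n} {ts : List (CTree n)} {i : ℕ}
    (hi : i < ts.length) :
    Monotonic (ts[i]).toModel (CTree.node c ts).toModel (childInc (c := c) hi) := by
  constructor
  · intro w u h
    obtain ⟨r, hr⟩ := h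
    exact ⟨r, by simp [childInc, ← hr]⟩
  · intro w p
    show (CTree.node c ts).toModel.V ⟨i :: w.1, _⟩ p = (ts[i]).toModel.V w p
    simp only [CTree.toModel, subt_cons_eq hi]

lemma toModel_V_eq {t u : CTree n} {w : t.toModel.W} {v : u.toModel.W}
    (h : subt w.1 t = subt v.1 u) (p : ℕ) : t.toModel.V w p = u.toModel.V v p := by
  by_cases hp : p < n <;> simp [CTree.toModel, hp, h]

/-- if a monotonic map into (the model of) `node c ts` does not send the root of the
domain to the root, then the whole domain maps into the model of one child. -/
lemma mle_child {s : CTree n} {c : Col n} {ts : List (CTree n)}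
    {f : s.toModel.W → (CTree.node c ts).toModel.W}
    (hf : Monotonic s.toModel (CTree.node c ts).toModel f)
    (hne : (f (root s)).1 ≠ []) :
    ∃ u ∈ ts, MLE u s := by
  obtain ⟨i, l, hil⟩ : ∃ i l, (f (root s)).1 = i :: l := by
    cases hfr : (f (root s)).1 with
    | nil => exact absurd hfr hne
    | cons i l => exact ⟨i, l, rfl⟩
  have hi : i < ts.length := (world_cons (hil ▸ (f (root s)).2)).1
  -- every image starts with `i`
  have hstart : ∀ x : s.toModel.W, ∃ m, (f x).1 = i :: m := by
    intro x
    have hroot : s.toModel.R (root s) x := List.nil_prefix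
    have hpre : (f (root s)).1 <+: (f x).1 := hf.1 _ _ hroot
    obtain ⟨r, hr⟩ := hpre
    exact ⟨l ++ r, by rw [← hr, hil]; rfl⟩
  have hvalid : ∀ x : s.toModel.W, (subt ((f x).1.tail) ts[i]).isSome = true := by
    intro x
    obtain ⟨m, hm⟩ := hstart x
    have := (f x).2
    rw [hm, subt_cons_eq hi] at this
    rw [hm]
    exact this
  refine ⟨ts[i], List.getElem_mem hi, fun x => ⟨(f x).1.tail, hvalid x⟩, ?_, ?_⟩
  · intro w u h
    have hp : (f w).1 <+: (f u).1 := hf.1 _ _ h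
    obtain ⟨mw, hmw⟩ := hstart w
    obtain ⟨mu, hmu⟩ := hstart u
    show (f w).1.tail <+: (f u).1.tail
    rw [hmw, hmu]
    rw [hmw, hmu, List.cons_prefix_cons] at hp
    exact hp.2
  · intro w p
    obtain ⟨m, hm⟩ := hstart w
    have h1 : (ts[i]).toModel.V ⟨(f w).1.tail, hvalid w⟩ p
        = (CTree.node c ts).toModel.V (f w) p := by
      apply toModel_V_eq
      show subt ((f w).1.tail) ts[i] = subt ((f w).1) (CTree.node c ts)
      rw [hm]
      exact (subt_cons_eq hi m).symm
    rw [h1, hf.2]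

/-- two lists strictly sorted by `code` with the same members are equal -/
lemma sorted_eq {l1 l2 : List (CTree n)}
    (h1 : List.Chain' (fun a b => CTree.code a < CTree.code b) l1)
    (h2 : List.Chain' (fun a b => CTree.code a < CTree.code b) l2)
    (hmem : ∀ x, x ∈ l1 ↔ x ∈ l2) : l1 = l2 := by
  classical
  haveI : IsTrans (CTree n) (fun a b => CTree.code a < CTree.code b) :=
    ⟨fun a b c hab hbc => lt_trans hab hbc⟩
  haveI : IsAntisymm (CTree n) (fun a b => CTree.code a < CTree.code b) :=
    ⟨fun a b hab hba => absurd hba (lt_asymm hab)⟩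
  have p1 : l1.Pairwise (fun a b => CTree.code a < CTree.code b) :=
    List.isChain_iff_pairwise.1 h1
  have p2 : l2.Pairwise (fun a b => CTree.code a < CTree.code b) :=
    List.isChain_iff_pairwise.1 h2
  have nd1 : l1.Nodup := p1.imp (fun h => by rintro rfl; exact lt_irrefl _ h)
  have nd2 : l2.Nodup := p2.imp (fun h => by rintro rfl; exact lt_irrefl _ h)
  have hperm : List.Perm l1 l2 := by
    apply List.perm_of_nodup_nodup_toFinset_eq nd1 nd2
    ext a
    simp [hmem a]
  exact hperm.eq_of_pairwise (fun a b _ _ hab hba => absurd hba (lt_asymm hab)) p1 p2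

lemma sizeOf_pos (t : CTree n) : 0 < sizeOf t := by
  cases t with
  | node c ts => simp only [CTree.node.sizeOf_spec]; omega

/-- main lemma: mutually monotonically mappable members of the universal model
are equal -/
lemma mutual_mle_eq : ∀ (N : ℕ) (t s : CTree n), sizeOf t + sizeOf s ≤ N →
    UMem t → UMem s → MLE t s → MLE s t → t = s := by
  intro N
  induction N with
  | zero =>
    intro t s hle _ _ _ _
    exact absurd hle (by have := sizeOf_pos t; have := sizeOf_pos s; omega)
  | succ N ih =>
    rintro ⟨c, ts⟩ ⟨c', ts'⟩ hle ht hs ⟨f, hf⟩ ⟨g, hg⟩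
    -- root colors
    have hfc : colAt (CTree.node c ts) (f (root (CTree.node c' ts')))
        = c' := by rw [hf.colAt_eq, colAt_root]; rfl
    have hgc : colAt (CTree.node c' ts') (g (root (CTree.node c ts)))
        = c := by rw [hg.colAt_eq, colAt_root]; rfl
    rcases colAt_cases ht (f (root (CTree.node c' ts'))) with hfr | hfr
    · rcases colAt_cases hs (g (root (CTree.node c ts))) with hgr | hgr
      · -- both roots map to roots
        have hcc : c = c' := by
          rw [← hfc, colAt_nil _ hfr]; rfl
        -- child hypotheses
        have hchain : List.Chain' (fun a b => CTree.code a < CTree.code b) ts := by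
          cases ht with
          | single _ => exact List.isChain_nil
          | step _ _ _ _ h3 _ _ => exact h3
        have hchain' : List.Chain' (fun a b => CTree.code a < CTree.code b) ts' := by
          cases hs with
          | single _ => exact List.isChain_nil
          | step _ _ _ _ h3 _ _ => exact h3
        have humem : ∀ u ∈ ts, UMem u := by
          cases ht with
          | single _ => intro u hu; simp at hu
          | step _ _ _ h2 _ _ _ => exact h2
        have humem' : ∀ u ∈ ts', UMem u := by
          cases hs with
          | single _ => intro u hu; simp at hu
          | step _ _ _ h2 _ _ _ => exact h2
        have hincomp : ∀ a ∈ ts, ∀ b ∈ ts, a ≠ b → ¬ MLE a b := by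
          cases ht with
          | single _ => intro a ha; simp at ha
          | step _ _ _ _ _ h4 _ => exact h4
        have hincomp' : ∀ a ∈ ts', ∀ b ∈ ts', a ≠ b → ¬ MLE a b := by
          cases hs with
          | single _ => intro a ha; simp at ha
          | step _ _ _ _ _ h4 _ => exact h4
        -- each child of one side maps into some child of the other
        have key : ∀ {d d' : Col n} {us us' : List (CTree n)}
            (hU : UMem (CTree.node d us)) (hU' : UMem (CTree.node d' us'))
            (hdd : d = d')
            (F : (CTree.node d' us').toModel.W → (CTree.node d us).toModel.W),
            Monotonic (CTree.node d' us').toModel (CTree.node d us).toModel F →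
            ∀ u ∈ us', ∃ v ∈ us, MLE v u := by
          intro d d' us us' hU hU' hdd F hF u hu
          obtain ⟨i, hi, rfl⟩ := List.getElem_of_mem hu
          have hcomp := (childInc_monotonic (c := d') hi).comp hF
          have hroot : (F (childInc hi (root us'[i]))).1 ≠ [] := by
            intro hnil
            have hc1 : colAt (CTree.node d us)
                ((F ∘ childInc hi) (root us'[i])) = (us'[i]).color := by
              rw [hcomp.colAt_eq, colAt_root]
            have hc2 : colAt (CTree.node d us)
                ((F ∘ childInc hi) (root us'[i])) = d :=
              colAt_nil _ hnil
            have hlt : ColLT d' (us'[i]).color := by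
              cases hU' with
              | single _ => exact absurd hi (by simp)
              | step _ _ _ _ _ _ h5 =>
                exact h5 us'[i] (List.getElem_mem hi) [] us'[i] rfl
            rw [hc1] at hc2
            exact hlt.2 (hdd ▸ hc2.symm)
          exact mle_child hcomp hroot
        have key1 := key ht hs hcc f hf
        have key2 := key hs ht hcc.symm g hg
        -- membership equivalence
        have hmem : ∀ x, x ∈ ts ↔ x ∈ ts' := by
          have half : ∀ (us us' : List (CTree n)),
              (∀ u ∈ us, ∃ v ∈ us', MLE v u) →
              (∀ u ∈ us', ∃ v ∈ us, MLE v u) →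
              (∀ a ∈ us, ∀ b ∈ us, a ≠ b → ¬ MLE a b) →
              (∀ u ∈ us, UMem u) → (∀ u ∈ us', UMem u) →
              sizeOf us + sizeOf us' ≤ N + 1 →
              ∀ x, x ∈ us → x ∈ us' := by
            intro us us' k1 k2 hinc hm hm' hsz x hx
            obtain ⟨v, hv, hvle⟩ := k1 x hx
            obtain ⟨w, hw, hwle⟩ := k2 v hv
            have hwx : MLE w x := hwle.trans' hvle
            have hwxeq : w = x := by
              by_contra hne
              exact hinc w hw x hx hne hwx
            subst hwxeq
            have hveq : v = w := by
              apply ih v w ?_ (hm' v hv) (hm w hw) hvle hwle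
              have s1 := List.sizeOf_lt_of_mem hv
              have s2 := List.sizeOf_lt_of_mem hw
              omega
            rwa [hveq] at hv
          have hsz : sizeOf ts + sizeOf ts' ≤ N + 1 := by
            simp only [CTree.node.sizeOf_spec] at hle
            omega
          intro x
          constructor
          · exact half ts ts' key2 key1 hincomp humem humem' hsz x
          · exact half ts' ts key1 key2 hincomp' humem' humem (by omega) x
        have : ts = ts' := sorted_eq hchain hchain' hmem
        rw [hcc, this]
      · -- f root → root, g root elsewhere : contradiction
        exfalso
        have hcc : c = c' := by rw [← hfc, colAt_nil _ hfr]; rfl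
        rw [hgc] at hgr
        exact hgr.2 (hcc ▸ rfl)
    · rcases colAt_cases hs (g (root (CTree.node c ts))) with hgr | hgr
      · exfalso
        have hcc : c' = c := by rw [← hgc, colAt_nil _ hgr]; rfl
        rw [hfc] at hfr
        exact hfr.2 hcc.symm
      · exfalso
        rw [hfc] at hfr
        rw [hgc] at hgr
        exact hfr.2 (colLE_antisymm hfr.1 hgr.1)

end Aux

/-- distinct nodes of the universal model `𝒯(n)` are not `≡`-equivalent:
there are no monotonic maps in both directions between them. -/
theorem univ_nodes_distinct_not_equiv (n : ℕ) (t s : CTree n)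
    (ht : UMem t) (hs : UMem s) (hne : t ≠ s) :
    ¬ (MLE t s ∧ MLE s t) := by
  rintro ⟨h1, h2⟩
  exact hne (mutual_mle_eq (sizeOf t + sizeOf s) t s le_rfl ht hs h1 h2)
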